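/- Let F be a field of prime characteristic p and let A ∈ M_p(F) (i.e., n = p) be a nil-clean matrix whose trace equals 0. Then A is unipotent or nilpotent. -/

import Mathlib

/-- An element of a ring is *nil-clean* if it is the sum of an idempotent
and a nilpotent element. -/
def IsNilClean {R : Type*} [Ring R] (a : R) : Prop :=
  ∃ e n : R, e ^ 2 = e ∧ IsNilpotent n ∧ a = e + n

/-- Over a field of prime characteristic `p`, a nil-clean `p × p` matrix of
trace `0` is unipotent or nilpotent. -/
theorem stmt_11 {F : Type*} [Field F] {p : ℕ} (hp : p.Prime) [CharP F p]
    (A : Matrix (Fin p) (Fin p) F) (hA : IsNilClean A) (htr : A.trace = 0) :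
    IsNilpotent (A - 1) ∨ IsNilpotent A := by
  obtain ⟨E, N, hE, hN, rfl⟩ := hA
  -- trace N = 0
  have htrN : N.trace = 0 := (Matrix.isNilpotent_trace_of_isNilpotent hN).eq_zero
  have htrE : E.trace = 0 := by
    have := htr
    rw [Matrix.trace_add, htrN, add_zero] at this
    exact this
  -- view E as a projection
  set e : (Fin p → F) →ₗ[F] (Fin p → F) := Matrix.toLin' E with he
  have hee : e ∘ₗ e = e := by
    rw [he, ← Matrix.toLin'_mul, ← pow_two, hE]
  obtain ⟨q, hq⟩ := (LinearMap.isProj_iff_isIdempotentElem e).mpr hee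
  have htr_e : LinearMap.trace F (Fin p → F) e = (Module.finrank F q : F) := hq.trace
  have htr_e' : LinearMap.trace F (Fin p → F) e = E.trace := by
    rw [LinearMap.trace_eq_matrix_trace F (Pi.basisFun F (Fin p)) e, he]
    congr 1
    rw [LinearMap.toMatrix_eq_toMatrix', LinearMap.toMatrix'_toLin']
  have hcast : (Module.finrank F q : F) = 0 := by rw [← htr_e, htr_e', htrE]
  have hdvd : p ∣ Module.finrank F q := (CharP.cast_eq_zero_iff F p _).mp hcast
  have hle : Module.finrank F q ≤ p := by
    have := Submodule.finrank_le q
    rwa [Module.finrank_fin_fun] at this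
  rcases hdvd with ⟨k, hk⟩
  rcases Nat.eq_zero_or_pos k with hk0 | hk1
  · -- finrank q = 0, so E = 0, A nilpotent
    right
    have hz : Module.finrank F q = 0 := by rw [hk, hk0, mul_zero]
    have hq0 : q = ⊥ := Submodule.finrank_eq_zero.mp hz
    have hE0 : E = 0 := by
      have h0 : e = 0 := LinearMap.ext fun x => by
        have := hq.map_mem x
        rwa [hq0, Submodule.mem_bot] at this
      have := congrArg LinearMap.toMatrix' h0
      rw [he, LinearMap.toMatrix'_toLin'] at this
      simpa using this
    simpa [hE0] using hN
  · -- finrank q = p, so E = 1, A - 1 nilpotent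
    left
    have hfr : Module.finrank F q = p := by nlinarith
    have hqtop : q = ⊤ := by
      apply Submodule.eq_top_of_finrank_eq
      simpa using hfr
    have hE1 : E = 1 := by
      have h1 : e = LinearMap.id := LinearMap.ext fun x =>
        hq.map_id x (by rw [hqtop]; trivial)
      have := congrArg LinearMap.toMatrix' h1
      rw [he, LinearMap.toMatrix'_toLin'] at this
      rw [this, ← Module.End.one_eq_id, LinearMap.toMatrix'_one]
    simpa [hE1] using hN
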